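/- (Three-block Gordon lemma) Let V : ℤ → ℝ. Suppose there is a sequence n_k → ∞ such that for every k, V(j − n_k) = V(j) = V(j + n_k) for all 1 ≤ j ≤ n_k. Then for every energy E ∈ ℝ and every solution φ of φ(n+1) + φ(n−1) + V(n)φ(n) = Eφ(n) with ‖(φ(1), φ(0))‖ = 1, one has max(‖Φ(−n_k)‖, ‖Φ(n_k)‖, ‖Φ(2n_k)‖) ≥ 1/2 for every k, where Φ(n) = (φ(n+1), φ(n)). In particular, E is not an eigenvalue of the associated Schrödinger operator. -/

import Mathlib

/-- Euclidean norm on ℝ². -/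
noncomputable def vnorm (v : Fin 2 → ℝ) : ℝ := Real.sqrt (v 0 ^ 2 + v 1 ^ 2)

open Filter

lemma vnorm_pair (a b : ℝ) : vnorm ![a,b] = Real.sqrt (a^2+b^2) := by simp [vnorm]

lemma vnorm_eq_abs (a b : ℝ) : vnorm ![a,b] = ‖(⟨a,b⟩ : ℂ)‖ := by
  rw [vnorm_pair, Complex.norm_def, Complex.normSq_mk]; ring_nf

lemma vnorm_smul (s a b : ℝ) : vnorm ![s*a, s*b] = |s| * vnorm ![a,b] := by
  rw [vnorm_pair, vnorm_pair, show (s*a)^2+(s*b)^2 = s^2*(a^2+b^2) by ring,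
    Real.sqrt_mul (sq_nonneg s), Real.sqrt_sq_eq_abs]

lemma key_ineq (t a1 a0 b1 b0 c1 c0 d1 d0 : ℝ)
    (h1 : a1 + c1 = t * b1) (h2 : a0 + c0 = t * b0)
    (h3 : b1 + d1 = t * c1) (h4 : b0 + d0 = t * c0)
    (hb : vnorm ![b1,b0] = 1) :
    max (vnorm ![a1,a0]) (max (vnorm ![c1,c0]) (vnorm ![d1,d0])) ≥ 1/2 := by
  set A : ℂ := ⟨a1,a0⟩
  set B : ℂ := ⟨b1,b0⟩
  set C : ℂ := ⟨c1,c0⟩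
  set D : ℂ := ⟨d1,d0⟩
  have hAC : A + C = (t : ℝ) • B := by
    apply Complex.ext <;> simp [A, B, C, Complex.real_smul, h1, h2]
  have hBD : B = (t : ℝ) • C - D := by
    apply Complex.ext <;> simp [B, C, D, Complex.real_smul] <;> linarith
  have hBabs : ‖B‖ = 1 := by rw [← vnorm_eq_abs]; exact hb
  have e1 : |t| ≤ ‖A‖ + ‖C‖ := by
    calc |t| = ‖A + C‖ := by
          rw [hAC, Complex.real_smul, norm_mul, Complex.norm_real, Real.norm_eq_abs, hBabs, mul_one]
      _ ≤ ‖A‖ + ‖C‖ := norm_add_le _ _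
  have e2 : (1:ℝ) ≤ |t| * ‖C‖ + ‖D‖ := by
    calc (1:ℝ) = ‖B‖ := hBabs.symm
      _ ≤ ‖(t:ℝ) • C‖ + ‖D‖ := by
          rw [hBD]; exact norm_sub_le _ _
      _ = |t| * ‖C‖ + ‖D‖ := by
          rw [Complex.real_smul, norm_mul, Complex.norm_real, Real.norm_eq_abs]
  rw [vnorm_eq_abs, vnorm_eq_abs, vnorm_eq_abs]
  by_contra h
  push_neg at h
  simp only [max_lt_iff] at h
  obtain ⟨hA, hC, hD⟩ := h
  have h0A := norm_nonneg A
  have h0C := norm_nonneg C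
  have h0D := norm_nonneg D
  nlinarith [abs_nonneg t]

noncomputable def Amat (V : ℤ → ℝ) (E : ℝ) (m : ℤ) : Matrix (Fin 2) (Fin 2) ℝ :=
  !![E - V m, -1; 1, 0]

noncomputable def Pmat (V : ℤ → ℝ) (E : ℝ) (b : ℤ) : ℕ → Matrix (Fin 2) (Fin 2) ℝ
  | 0 => 1
  | (j+1) => Amat V E (b + j + 1) * Pmat V E b j

def gvec (φ : ℤ → ℝ) (m : ℤ) : Fin 2 → ℝ := ![φ (m+1), φ m]

lemma gvec_step (V : ℤ → ℝ) (E : ℝ) (φ : ℤ → ℝ)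
    (hφ : ∀ m : ℤ, φ (m + 1) + φ (m - 1) + V m * φ m = E * φ m) (m : ℤ) :
    gvec φ m = (Amat V E m).mulVec (gvec φ (m-1)) := by
  have h := hφ m
  funext i
  fin_cases i <;>
    simp [gvec, Amat, Matrix.mulVec, dotProduct, Fin.sum_univ_two, sub_add_cancel]
  · linarith

lemma gvec_prod (V : ℤ → ℝ) (E : ℝ) (φ : ℤ → ℝ)
    (hφ : ∀ m : ℤ, φ (m + 1) + φ (m - 1) + V m * φ m = E * φ m) (b : ℤ) :
    ∀ j : ℕ, gvec φ (b + j) = (Pmat V E b j).mulVec (gvec φ b)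
  | 0 => by simp [Pmat, Matrix.one_mulVec]
  | (j+1) => by
      have h1 : gvec φ (b + (j+1:ℕ)) = (Amat V E (b + j + 1)).mulVec (gvec φ (b + j)) := by
        have := gvec_step V E φ hφ (b + j + 1)
        have e : b + (j:ℤ) + 1 - 1 = b + (j:ℤ) := by ring
        rw [e] at this
        push_cast
        rw [show b + ((j:ℤ) + 1) = b + (j:ℤ) + 1 by ring]
        exact this
      rw [h1, gvec_prod V E φ hφ b j, Matrix.mulVec_mulVec, Pmat]

lemma Pmat_det (V : ℤ → ℝ) (E : ℝ) (b : ℤ) : ∀ j : ℕ, (Pmat V E b j).det = 1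
  | 0 => by simp [Pmat]
  | (j+1) => by
      rw [Pmat, Matrix.det_mul, Pmat_det V E b j, mul_one]
      simp [Amat, Matrix.det_fin_two_of]

lemma Pmat_congr (V : ℤ → ℝ) (E : ℝ) (b : ℤ) (N : ℕ)
    (h : ∀ j : ℤ, 1 ≤ j → j ≤ (N:ℤ) → V (b + j) = V j) :
    ∀ j : ℕ, j ≤ N → Pmat V E b j = Pmat V E 0 j
  | 0, _ => rfl
  | (j+1), hj => by
      have hA : Amat V E (b + j + 1) = Amat V E (0 + j + 1) := by
        have := h (j+1) (by omega) (by exact_mod_cast hj)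
        simp only [Amat]
        rw [add_assoc]
        push_cast at this ⊢
        rw [this]
        ring_nf
      rw [Pmat, Pmat, hA, Pmat_congr V E b N h j (Nat.le_of_succ_le hj)]

lemma ch2 (M : Matrix (Fin 2) (Fin 2) ℝ) :
    M * M = (Matrix.trace M) • M - (M.det) • (1 : Matrix (Fin 2) (Fin 2) ℝ) := by
  ext i j
  fin_cases i <;> fin_cases j <;>
    simp [Matrix.mul_apply, Matrix.trace_fin_two, Matrix.det_fin_two, Fin.sum_univ_two,
      Matrix.one_apply] <;> ring

lemma transfer_identity (V : ℤ → ℝ) (E : ℝ) (φ : ℤ → ℝ)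
    (hφ : ∀ m : ℤ, φ (m + 1) + φ (m - 1) + V m * φ m = E * φ m) (N : ℕ)
    (hN : ∀ j : ℤ, 1 ≤ j → j ≤ (N:ℤ) → V (j - N) = V j ∧ V j = V (j + N)) :
    ∃ t : ℝ,
      (φ (-(N:ℤ) + 1) + φ ((N:ℤ)+1) = t * φ 1) ∧
      (φ (-(N:ℤ)) + φ ((N:ℤ)) = t * φ 0) ∧
      (φ 1 + φ (2*(N:ℤ)+1) = t * φ ((N:ℤ)+1)) ∧
      (φ 0 + φ (2*(N:ℤ)) = t * φ ((N:ℤ))) := by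
  set M := Pmat V E 0 N with hM
  set t := Matrix.trace M with ht
  refine ⟨t, ?_⟩
  have hsq : ∀ v : Fin 2 → ℝ, (M * M).mulVec v = t • M.mulVec v - v := by
    intro v
    rw [ch2 M, hM, Pmat_det V E 0 N, Matrix.sub_mulVec, Matrix.smul_mulVec,
      one_smul, Matrix.one_mulVec]
  have hP0 : gvec φ (N:ℤ) = M.mulVec (gvec φ 0) := by
    have := gvec_prod V E φ hφ 0 N
    simpa using this
  have hPn : gvec φ (2*(N:ℤ)) = M.mulVec (gvec φ (N:ℤ)) := by
    have hc : Pmat V E (N:ℤ) N = M := by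
      refine Pmat_congr V E (N:ℤ) N (fun j h1 h2 => ?_) N le_rfl
      rw [add_comm]
      exact ((hN j h1 h2).2).symm
    have := gvec_prod V E φ hφ (N:ℤ) N
    rw [hc] at this
    rw [show 2*(N:ℤ) = (N:ℤ) + (N:ℤ) by ring]
    exact this
  have hPm : gvec φ 0 = M.mulVec (gvec φ (-(N:ℤ))) := by
    have hc : Pmat V E (-(N:ℤ)) N = M := by
      refine Pmat_congr V E (-(N:ℤ)) N (fun j h1 h2 => ?_) N le_rfl
      rw [show -(N:ℤ) + j = j - N by ring]
      exact (hN j h1 h2).1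
    have := gvec_prod V E φ hφ (-(N:ℤ)) N
    rw [hc] at this
    simpa using this
  have idA : gvec φ (2*(N:ℤ)) = t • gvec φ (N:ℤ) - gvec φ 0 := by
    rw [hPn, hP0, Matrix.mulVec_mulVec, hsq, ← hP0]
  have idB : gvec φ (N:ℤ) = t • gvec φ 0 - gvec φ (-(N:ℤ)) := by
    rw [hP0, hPm, Matrix.mulVec_mulVec, hsq, ← hPm]
  have eA0 := congrFun idA 0
  have eA1 := congrFun idA 1
  have eB0 := congrFun idB 0
  have eB1 := congrFun idB 1
  simp only [gvec, Matrix.cons_val_zero, Matrix.cons_val_one, Matrix.head_cons,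
    Pi.smul_apply, Pi.sub_apply, smul_eq_mul, zero_add] at eA0 eA1 eB0 eB1
  refine ⟨by linarith, by linarith, by linarith, by linarith⟩

lemma sol_zero (V : ℤ → ℝ) (E : ℝ) (φ : ℤ → ℝ)
    (hφ : ∀ m : ℤ, φ (m + 1) + φ (m - 1) + V m * φ m = E * φ m)
    (h0 : φ 0 = 0) (h1 : φ 1 = 0) : φ = 0 := by
  have pos : ∀ j : ℕ, φ j = 0 ∧ φ (j+1) = 0 := by
    intro j
    induction j with
    | zero => exact ⟨by exact_mod_cast h0, by exact_mod_cast h1⟩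
    | succ j ih =>
      have h := hφ ((j:ℤ)+1)
      have e : ((j:ℤ)+1) - 1 = (j:ℤ) := by ring
      rw [e] at h
      constructor
      · exact_mod_cast ih.2
      · push_cast
        push_cast at ih
        rw [ih.1, ih.2] at h
        linarith [h]
  have neg : ∀ j : ℕ, φ (-(j:ℤ)) = 0 ∧ φ (-(j:ℤ)+1) = 0 := by
    intro j
    induction j with
    | zero => exact ⟨by simpa using h0, by simpa using h1⟩
    | succ j ih =>
      have h := hφ (-(j:ℤ))
      constructor
      · have e : -(((j:ℕ)+1:ℕ):ℤ) = -(j:ℤ) - 1 := by push_cast; ring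
        rw [e]
        rw [ih.1, ih.2] at h
        linarith [h]
      · have e : -(((j:ℕ)+1:ℕ):ℤ) + 1 = -(j:ℤ) := by push_cast; ring
        rw [e]; exact ih.1
  funext m
  rcases m with m | m
  · exact (pos m).1
  · have := (neg (m+1)).1
    simpa [Int.negSucc_eq] using this

lemma tendsto_cof_of_atTop {f : ℕ → ℤ} (h : Tendsto f atTop atTop) :
    Tendsto f atTop (cofinite : Filter ℤ) :=
  h.mono_right (by rw [Int.cofinite_eq]; exact le_sup_right)

lemma tendsto_cof_of_atBot {f : ℕ → ℤ} (h : Tendsto f atTop atBot) :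
    Tendsto f atTop (cofinite : Filter ℤ) :=
  h.mono_right (by rw [Int.cofinite_eq]; exact le_sup_left)

/-- Three-block Gordon lemma: if the potential `V` obeys
`V(j − n_k) = V(j) = V(j + n_k)` for `1 ≤ j ≤ n_k` along a sequence `n_k → ∞`, then for
every energy `E` and every solution `φ` of the difference equation with
`‖(φ(1),φ(0))‖ = 1` one has `max(‖Φ(−n_k)‖, ‖Φ(n_k)‖, ‖Φ(2n_k)‖) ≥ 1/2`; in particular
`E` is not an eigenvalue (there is no nonzero ℓ² solution). -/
theorem three_block_gordon (V : ℤ → ℝ) (n : ℕ → ℕ)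
    (hn : Filter.Tendsto n Filter.atTop Filter.atTop)
    (hrep : ∀ k, ∀ j : ℤ, 1 ≤ j → j ≤ (n k : ℤ) →
      V (j - (n k : ℤ)) = V j ∧ V j = V (j + (n k : ℤ))) :
    ∀ E : ℝ,
    (∀ φ : ℤ → ℝ,
      (∀ m : ℤ, φ (m + 1) + φ (m - 1) + V m * φ m = E * φ m) →
      vnorm ![φ 1, φ 0] = 1 →
      ∀ k, max (vnorm ![φ (-(n k : ℤ) + 1), φ (-(n k : ℤ))])
            (max (vnorm ![φ ((n k : ℤ) + 1), φ (n k : ℤ)])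
              (vnorm ![φ (2 * (n k : ℤ) + 1), φ (2 * (n k : ℤ))])) ≥ 1 / 2) ∧
    (∀ φ : ℤ → ℝ,
      (∀ m : ℤ, φ (m + 1) + φ (m - 1) + V m * φ m = E * φ m) →
      Summable (fun m : ℤ => (φ m) ^ 2) → φ = 0) := by
  intro E
  have part1 : ∀ φ : ℤ → ℝ,
      (∀ m : ℤ, φ (m + 1) + φ (m - 1) + V m * φ m = E * φ m) →
      vnorm ![φ 1, φ 0] = 1 →
      ∀ k, max (vnorm ![φ (-(n k : ℤ) + 1), φ (-(n k : ℤ))])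
            (max (vnorm ![φ ((n k : ℤ) + 1), φ (n k : ℤ)])
              (vnorm ![φ (2 * (n k : ℤ) + 1), φ (2 * (n k : ℤ))])) ≥ 1 / 2 := by
    intro φ hφ hnorm k
    obtain ⟨t, h1, h2, h3, h4⟩ := transfer_identity V E φ hφ (n k) (hrep k)
    exact key_ineq t _ _ _ _ _ _ _ _ h1 h2 h3 h4 hnorm
  refine ⟨part1, ?_⟩
  intro φ hφ hsum
  by_contra hne
  have hc : ¬ (φ 0 = 0 ∧ φ 1 = 0) := by
    intro h
    exact hne (sol_zero V E φ hφ h.1 h.2)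
  set c := vnorm ![φ 1, φ 0] with hcdef
  have hcpos : 0 < c := by
    rw [hcdef, vnorm_pair]
    apply Real.sqrt_pos.mpr
    rcases not_and_or.mp hc with h | h
    · have h2 : (0:ℝ) < φ 0 ^ 2 := (sq_nonneg _).lt_of_ne' (pow_ne_zero 2 h)
      nlinarith [sq_nonneg (φ 1)]
    · have h2 : (0:ℝ) < φ 1 ^ 2 := (sq_nonneg _).lt_of_ne' (pow_ne_zero 2 h)
      nlinarith [sq_nonneg (φ 0)]
  set ψ : ℤ → ℝ := fun m => c⁻¹ * φ m with hψdef
  have hψ : ∀ m : ℤ, ψ (m + 1) + ψ (m - 1) + V m * ψ m = E * ψ m := by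
    intro m
    simp only [hψdef]
    linear_combination c⁻¹ * hφ m
  have hψnorm : vnorm ![ψ 1, ψ 0] = 1 := by
    simp only [hψdef]
    rw [vnorm_smul, ← hcdef, abs_of_pos (inv_pos.mpr hcpos), inv_mul_cancel₀ hcpos.ne']
  have hge := part1 ψ hψ hψnorm
  -- decay of φ along the sequences
  have htend0 : Tendsto (fun m : ℤ => (φ m)^2) cofinite (nhds 0) :=
    hsum.tendsto_cofinite_zero
  have hint : Tendsto (fun k => (n k : ℤ)) atTop atTop :=
    tendsto_natCast_atTop_atTop.comp hn
  have hsq : ∀ f : ℕ → ℤ, Tendsto f atTop (cofinite : Filter ℤ) →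
      Tendsto (fun k => (φ (f k))^2) atTop (nhds 0) := fun f hf => htend0.comp hf
  have hvn : ∀ f g : ℕ → ℤ, Tendsto f atTop (cofinite : Filter ℤ) →
      Tendsto g atTop (cofinite : Filter ℤ) →
      Tendsto (fun k => vnorm ![φ (f k), φ (g k)]) atTop (nhds 0) := by
    intro f g hf hg
    have h1 : Tendsto (fun k => (φ (f k))^2 + (φ (g k))^2) atTop (nhds 0) := by
      simpa using (hsq f hf).add (hsq g hg)
    have h2 := h1.sqrt
    simp only [Real.sqrt_zero] at h2
    refine h2.congr (fun k => ?_)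
    rw [vnorm_pair]
  have t1 : Tendsto (fun k => -(n k : ℤ) + 1) atTop atBot :=
    tendsto_atBot_add_const_right _ 1 (tendsto_neg_atBot_iff.mpr hint)
  have t2 : Tendsto (fun k => -(n k : ℤ)) atTop atBot := tendsto_neg_atBot_iff.mpr hint
  have t3 : Tendsto (fun k => (n k : ℤ) + 1) atTop atTop :=
    tendsto_atTop_add_const_right _ 1 hint
  have t5 : Tendsto (fun k => 2 * (n k : ℤ)) atTop atTop := by
    have := Filter.Tendsto.atTop_add_atTop hint hint
    simpa [two_mul] using this
  have t6 : Tendsto (fun k => 2 * (n k : ℤ) + 1) atTop atTop :=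
    tendsto_atTop_add_const_right _ 1 t5
  have m1 := hvn _ _ (tendsto_cof_of_atBot t1) (tendsto_cof_of_atBot t2)
  have m2 := hvn _ _ (tendsto_cof_of_atTop t3) (tendsto_cof_of_atTop hint)
  have m3 := hvn _ _ (tendsto_cof_of_atTop t6) (tendsto_cof_of_atTop t5)
  have hMtend : Tendsto (fun k =>
      max (vnorm ![φ (-(n k : ℤ) + 1), φ (-(n k : ℤ))])
        (max (vnorm ![φ ((n k : ℤ) + 1), φ (n k : ℤ)])
          (vnorm ![φ (2 * (n k : ℤ) + 1), φ (2 * (n k : ℤ))]))) atTop (nhds 0) := by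
    have := m1.max (m2.max m3)
    simpa using this
  have hev := hMtend.eventually_lt_const (by positivity : (0:ℝ) < c/2)
  obtain ⟨k, hk⟩ := hev.exists
  -- from hge k derive a lower bound c/2 ≤ max ... for φ
  have hgek := hge k
  have e1 : vnorm ![ψ (-(n k : ℤ) + 1), ψ (-(n k : ℤ))] =
      c⁻¹ * vnorm ![φ (-(n k : ℤ) + 1), φ (-(n k : ℤ))] := by
    simp only [hψdef]; rw [vnorm_smul, abs_of_pos (inv_pos.mpr hcpos)]
  have e2 : vnorm ![ψ ((n k : ℤ) + 1), ψ (n k : ℤ)] =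
      c⁻¹ * vnorm ![φ ((n k : ℤ) + 1), φ (n k : ℤ)] := by
    simp only [hψdef]; rw [vnorm_smul, abs_of_pos (inv_pos.mpr hcpos)]
  have e3 : vnorm ![ψ (2 * (n k : ℤ) + 1), ψ (2 * (n k : ℤ))] =
      c⁻¹ * vnorm ![φ (2 * (n k : ℤ) + 1), φ (2 * (n k : ℤ))] := by
    simp only [hψdef]; rw [vnorm_smul, abs_of_pos (inv_pos.mpr hcpos)]
  rw [e1, e2, e3] at hgek
  set X := vnorm ![φ (-(n k : ℤ) + 1), φ (-(n k : ℤ))] with hX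
  set Y := vnorm ![φ ((n k : ℤ) + 1), φ (n k : ℤ)] with hY
  set Z := vnorm ![φ (2 * (n k : ℤ) + 1), φ (2 * (n k : ℤ))] with hZ
  have hMle : max (c⁻¹ * X) (max (c⁻¹ * Y) (c⁻¹ * Z)) ≤ c⁻¹ * max X (max Y Z) := by
    have hci : 0 ≤ c⁻¹ := (inv_pos.mpr hcpos).le
    refine max_le ?_ (max_le ?_ ?_) <;>
      apply mul_le_mul_of_nonneg_left _ hci
    · exact le_max_left _ _
    · exact le_trans (le_max_left _ _) (le_max_right _ _)
    · exact le_trans (le_max_right _ _) (le_max_right _ _)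
  have hfinal : c/2 ≤ max X (max Y Z) := by
    have h12 : (1:ℝ)/2 ≤ c⁻¹ * max X (max Y Z) := le_trans hgek hMle
    calc c/2 = c * (1/2) := by ring
      _ ≤ c * (c⁻¹ * max X (max Y Z)) := by
          exact mul_le_mul_of_nonneg_left h12 hcpos.le
      _ = max X (max Y Z) := by
          rw [← mul_assoc, mul_inv_cancel₀ hcpos.ne', one_mul]
  exact absurd hk (not_lt.mpr hfinal)
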